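/- For the cost function c(k) = k + k(n−k)(n−k−1) on {0,...,n}, c(0) = 0 is the unique global minimum, c is strictly decreasing on the integer range ⌈n/3⌉ + 1 ≤ k ≤ n − 1 for sufficiently large n, and c(n−1) = n−1 < c(k) for all k with 1 ≤ k ≤ n−2 (i.e., k = n−1 is a strict local minimum among {1,...,n}). -/
import Mathlib


/-- For `c(k) = k + k(n−k)(n−k−1)` on `{0,...,n}` and sufficiently large `n`:
`c(0) = 0` is the unique global minimum; `c` is strictly decreasing on the range
`⌈n/3⌉ + 1 ≤ k ≤ n − 1`; and `c(n−1) = n−1 < c(k)` for all `1 ≤ k ≤ n−2`, so `k = n−1`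
is a strict local minimum among `{1,...,n}`. -/
theorem stmt_15 :
    ∃ N : ℕ, ∀ n : ℕ, N ≤ n →
      (let c : ℕ → ℤ := fun k => (k : ℤ) + (k : ℤ) * ((n : ℤ) - k) * ((n : ℤ) - k - 1);
        (c 0 = 0 ∧ ∀ k, 1 ≤ k → k ≤ n → c 0 < c k) ∧
        (∀ k, (n + 2) / 3 + 1 ≤ k → k < n - 1 → c (k + 1) < c k) ∧
        (c (n - 1) = (n : ℤ) - 1 ∧ ∀ k, 1 ≤ k → k ≤ n - 2 → (n : ℤ) - 1 < c k)) := by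
  refine ⟨10, fun n hn => ?_⟩
  intro c
  have hn' : (10 : ℤ) ≤ (n : ℤ) := by exact_mod_cast hn
  refine ⟨⟨by simp [c], ?_⟩, ?_, ?_, ?_⟩
  · intro k hk1 hkn
    have h1 : (1 : ℤ) ≤ (k : ℤ) := by exact_mod_cast hk1
    have h2 : (k : ℤ) ≤ (n : ℤ) := by exact_mod_cast hkn
    have hprod : 0 ≤ ((n : ℤ) - k) * ((n : ℤ) - k - 1) := by
      rcases eq_or_lt_of_le h2 with h | h
      · simp [h]
      · have : (1 : ℤ) ≤ (n : ℤ) - k := by linarith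
        nlinarith
    have : 0 ≤ (k : ℤ) * (((n : ℤ) - k) * ((n : ℤ) - k - 1)) :=
      mul_nonneg (by linarith) hprod
    simp only [c, Nat.cast_zero]
    nlinarith
  · intro k hk1 hk2
    have h3k : n + 3 ≤ 3 * k := by
      have : (n + 2) / 3 < k := hk1
      have := (Nat.div_lt_iff_lt_mul (by norm_num : 0 < 3)).mp this
      omega
    have hkn : k + 2 ≤ n := by omega
    have h3k' : (n : ℤ) + 3 ≤ 3 * (k : ℤ) := by exact_mod_cast h3k
    have hkn' : (k : ℤ) + 2 ≤ (n : ℤ) := by exact_mod_cast hkn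
    simp only [c]
    push_cast
    nlinarith [mul_nonneg (by linarith : (0:ℤ) ≤ (n:ℤ) - k - 2)
      (by linarith : (0:ℤ) ≤ 3 * (k:ℤ) - (n:ℤ) - 3)]
  · have h1 : ((n - 1 : ℕ) : ℤ) = (n : ℤ) - 1 := by
      have : 1 ≤ n := by omega
      push_cast [this]; ring
    simp only [c, h1]; ring
  · intro k hk1 hk2
    have h1 : (1 : ℤ) ≤ (k : ℤ) := by exact_mod_cast hk1
    have hkn : k + 2 ≤ n := by omega
    have h2 : (k : ℤ) + 2 ≤ (n : ℤ) := by exact_mod_cast hkn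
    simp only [c]
    nlinarith [mul_nonneg (by linarith : (0:ℤ) ≤ (k:ℤ) - 1)
      (by nlinarith : (0:ℤ) ≤ ((n:ℤ) - k) * ((n:ℤ) - k - 1))]
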